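/- Let A be a complex Banach algebra and σ : A → A a bounded algebra endomorphism. There do not exist elements a, b, c ∈ A with aσ(b) − σ(b)a = c satisfying all of: (i) σ(a)σ²(b) − σ²(b)σ(a) = aσ(b) − σ(b)a; (ii) (σ²(b) − σ(b))a = a(σ²(b) − σ(b)); (iii) aσ(c) − σ(c)a = 0; (iv) c is not quasinilpotent. Equivalently, if a, b, c ∈ A satisfy aσ(b) − σ(b)a = c together with (i), (ii), (iii), then c is quasinilpotent. -/

import Mathlib

open Filter Topology

/-- generalized Wielandt–Wintner theorem: In a complex Banach
algebra with a bounded endomorphism `σ`, there are no `a, b, c` with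
`aσ(b) − σ(b)a = c` satisfying (i) `σ(a)σ²(b) − σ²(b)σ(a) = aσ(b) − σ(b)a`,
(ii) `(σ²(b) − σ(b))a = a(σ²(b) − σ(b))`, (iii) `aσ(c) − σ(c)a = 0`, and
(iv) `c` not quasinilpotent. -/
theorem stmt_17 {A : Type*} [NormedRing A] [NormedAlgebra ℂ A] [CompleteSpace A]
    (σ : A →L[ℂ] A) (hσ : ∀ a b : A, σ (a * b) = σ a * σ b) :
    ¬ ∃ a b c : A,
        a * σ b - σ b * a = c ∧
        σ a * σ (σ b) - σ (σ b) * σ a = a * σ b - σ b * a ∧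
        (σ (σ b) - σ b) * a = a * (σ (σ b) - σ b) ∧
        a * σ c - σ c * a = 0 ∧
        spectralRadius ℂ c ≠ 0 := by
  rintro ⟨a, b, c, hc, hi, _hii, hiii, hr⟩
  apply hr
  set y := σ b with hy
  -- σ c = c, so a commutes with c
  have hσc : σ c = c := by
    rw [← hc, map_sub, hσ, hσ, hi, hc]
  have hac : a * c = c * a := by
    rw [hσc] at hiii
    exact sub_eq_zero.mp hiii
  -- the inner derivation
  set f : A → A := fun x => a * x - x * a with hf
  have fy : f y = c := hc
  have fc : f c = 0 := sub_eq_zero_of_eq hac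
  have f0 : f 0 = 0 := by simp [hf]
  have f1 : f 1 = 0 := by simp [hf]
  have fadd : ∀ x z, f (x + z) = f x + f z := by
    intro x z; simp only [hf]; noncomm_ring
  have fcmul : ∀ x, f (c * x) = c * f x := by
    intro x
    show a * (c * x) - c * x * a = c * (a * x - x * a)
    rw [← mul_assoc, hac, mul_assoc, mul_assoc, mul_sub]
  have fit0 : ∀ k, f^[k] 0 = 0 := fun k => Function.iterate_fixed f0 k
  have fitadd : ∀ k x z, f^[k] (x + z) = f^[k] x + f^[k] z := by
    intro k
    induction k with
    | zero => simp
    | succ k ih =>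
      intro x z
      rw [Function.iterate_succ_apply, Function.iterate_succ_apply,
        Function.iterate_succ_apply, fadd, ih]
  have fitcmul : ∀ k x, f^[k] (c * x) = c * f^[k] x := by
    intro k
    induction k with
    | zero => simp
    | succ k ih =>
      intro x
      rw [Function.iterate_succ_apply, Function.iterate_succ_apply, fcmul, ih]
  have base : ∀ w, f (y * w) = y * f w + c * w := by
    intro w
    show a * (y * w) - y * w * a = y * (a * w - w * a) + c * w
    rw [← hc]; noncomm_ring
  have step : ∀ k w, f^[k + 1] (y * w) = y * f^[k + 1] w + (k + 1) • (c * f^[k] w) := by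
    intro k
    induction k with
    | zero =>
      intro w
      simpa using base w
    | succ k ih =>
      intro w
      rw [Function.iterate_succ_apply (n := k + 1), base w, fitadd, fitcmul, ih (f w),
        ← Function.iterate_succ_apply, ← Function.iterate_succ_apply,
        succ_nsmul (c * f^[k + 1] w) (k + 1)]
      abel
  -- main algebraic identity
  have main : ∀ m : ℕ, f^[m] (y ^ m) = m.factorial • c ^ m ∧
      ∀ k, m < k → f^[k] (y ^ m) = 0 := by
    intro m
    induction m with
    | zero =>
      refine ⟨by simp, fun k hk => ?_⟩
      cases k with
      | zero => omega
      | succ j => rw [pow_zero, Function.iterate_succ_apply, f1, fit0]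
    | succ m ih =>
      obtain ⟨ih1, ih2⟩ := ih
      constructor
      · rw [pow_succ', step m (y ^ m), ih1, ih2 (m + 1) (Nat.lt_succ_self m),
          mul_smul_comm, ← pow_succ', smul_smul]
        simp [Nat.factorial_succ]
      · intro k hk
        cases k with
        | zero => omega
        | succ j =>
          rw [pow_succ', step j (y ^ m), ih2 (j + 1) (by omega), ih2 j (by omega)]
          simp
  -- norm estimates
  have fnorm : ∀ x, ‖f x‖ ≤ 2 * ‖a‖ * ‖x‖ := by
    intro x
    calc ‖a * x - x * a‖ ≤ ‖a * x‖ + ‖x * a‖ := norm_sub_le _ _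
      _ ≤ ‖a‖ * ‖x‖ + ‖x‖ * ‖a‖ := add_le_add (norm_mul_le _ _) (norm_mul_le _ _)
      _ = 2 * ‖a‖ * ‖x‖ := by ring
  have fitnorm : ∀ n x, ‖f^[n] x‖ ≤ (2 * ‖a‖) ^ n * ‖x‖ := by
    intro n
    induction n with
    | zero => simp
    | succ n ih =>
      intro x
      calc ‖f^[n + 1] x‖ = ‖f^[n] (f x)‖ := by rw [Function.iterate_succ_apply]
        _ ≤ (2 * ‖a‖) ^ n * ‖f x‖ := ih (f x)
        _ ≤ (2 * ‖a‖) ^ n * (2 * ‖a‖ * ‖x‖) := by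
            exact mul_le_mul_of_nonneg_left (fnorm x) (by positivity)
        _ = (2 * ‖a‖) ^ (n + 1) * ‖x‖ := by ring
  have cbound : ∀ n : ℕ, 1 ≤ n → (n.factorial : ℝ) * ‖c ^ n‖ ≤ (2 * ‖a‖ * ‖y‖) ^ n := by
    intro n hn
    have h1 : n.factorial • c ^ n = ((n.factorial : ℂ)) • c ^ n := (Nat.cast_smul_eq_nsmul ℂ _ _).symm
    have h2 : (n.factorial : ℝ) * ‖c ^ n‖ = ‖f^[n] (y ^ n)‖ := by
      rw [(main n).1, h1, norm_smul]
      simp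
    rw [h2, mul_pow]
    calc ‖f^[n] (y ^ n)‖ ≤ (2 * ‖a‖) ^ n * ‖y ^ n‖ := fitnorm n _
      _ ≤ (2 * ‖a‖) ^ n * ‖y‖ ^ n := by
          exact mul_le_mul_of_nonneg_left (norm_pow_le' y hn) (by positivity)
  -- Gelfand's formula: the sequence tends to the spectral radius, and also to 0
  have gel := spectrum.pow_norm_pow_one_div_tendsto_nhds_spectralRadius c
  have hg0 : Tendsto (fun n : ℕ => ‖c ^ n‖ ^ (1 / (n : ℝ))) atTop (𝓝 0) := by
    rw [Metric.tendsto_atTop]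
    intro ε hε
    set M := 2 * ‖a‖ * ‖y‖ with hM
    have hMnn : 0 ≤ M := by positivity
    have hε2 : (0 : ℝ) < ε / 2 := by linarith
    have h := FloorSemiring.tendsto_pow_div_factorial_atTop (K := ℝ) (M / (ε / 2))
    rw [Metric.tendsto_atTop] at h
    obtain ⟨N, hN⟩ := h 1 one_pos
    refine ⟨max N 1, fun n hn => ?_⟩
    have hn1 : 1 ≤ n := le_trans (le_max_right _ _) hn
    have hnN : N ≤ n := le_trans (le_max_left _ _) hn
    have hfact : (0 : ℝ) < (n.factorial : ℝ) := by exact_mod_cast Nat.factorial_pos n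
    have hp : (0 : ℝ) < (ε / 2) ^ n := by positivity
    have h2 : (M / (ε / 2)) ^ n / (n.factorial : ℝ) < 1 := by
      have := hN n hnN
      rw [Real.dist_eq, sub_zero] at this
      exact lt_of_abs_lt this
    have h3 : M ^ n / (n.factorial : ℝ) < (ε / 2) ^ n := by
      rw [div_pow, div_div] at h2
      have h2' : M ^ n < (ε / 2) ^ n * (n.factorial : ℝ) := (div_lt_one (by positivity)).mp h2
      rw [div_lt_iff₀ hfact]
      exact h2'
    have h4 : ‖c ^ n‖ ≤ (ε / 2) ^ n := by
      have hcb := cbound n hn1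
      have : ‖c ^ n‖ ≤ M ^ n / (n.factorial : ℝ) := by
        rw [le_div_iff₀ hfact, mul_comm]
        exact hcb
      linarith
    have hnR : (0 : ℝ) < (n : ℝ) := by exact_mod_cast hn1
    have h5 : ‖c ^ n‖ ^ (1 / (n : ℝ)) ≤ ε / 2 := by
      calc ‖c ^ n‖ ^ (1 / (n : ℝ)) ≤ ((ε / 2) ^ n) ^ (1 / (n : ℝ)) :=
            Real.rpow_le_rpow (norm_nonneg _) h4 (by positivity)
        _ = ε / 2 := by
            rw [← Real.rpow_natCast (ε / 2) n, ← Real.rpow_mul hε2.le, mul_one_div,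
              div_self (ne_of_gt hnR), Real.rpow_one]
    rw [Real.dist_eq, sub_zero, abs_of_nonneg (Real.rpow_nonneg (norm_nonneg _) _)]
    linarith
  have h0 : Tendsto (fun n : ℕ => ENNReal.ofReal (‖c ^ n‖ ^ (1 / (n : ℝ)))) atTop
      (𝓝 (0 : ENNReal)) := by
    have := (ENNReal.continuous_ofReal.tendsto 0).comp hg0
    simpa [Function.comp_def] using this
  exact tendsto_nhds_unique gel h0
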